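/- Let u, u_ε ∈ C(D) with ‖u_ε − u‖_∞ < ε, and suppose |{x ∈ D : u(x) = c_i}| = 0 for all interior thresholds c_1,…,c_{n−1}. Then ‖F(u_ε) − F(u)‖_{L^p(D)} → 0 as ε → 0, for every 1 ≤ p < ∞; i.e., the level set map F is continuous at u in L^p whenever the level sets of u at the threshold values are Lebesgue-null. -/

import Mathlib

open MeasureTheory Filter
open scoped BigOperators

/-- The level set map `F(u) = ∑ κ_i 1_{D_i(u)}`, where
`D_i(u) = {x ∈ D : c_{i−1} ≤ u(x) < c_i}` for extended-real thresholds
`−∞ = c_0 < c_1 < ⋯ < c_n = ∞`. -/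
noncomputable def levelSetMap {d n : ℕ} (D : Set (EuclideanSpace ℝ (Fin d)))
    (c : Fin (n + 1) → EReal) (κ : Fin n → ℝ)
    (u : EuclideanSpace ℝ (Fin d) → ℝ) (x : EuclideanSpace ℝ (Fin d)) : ℝ :=
  ∑ i : Fin n, κ i *
    Set.indicator {y ∈ D | c i.castSucc ≤ (u y : EReal) ∧ (u y : EReal) < c i.succ}
      (fun _ => (1 : ℝ)) x


lemma lvl_meas {d n : ℕ} (D : Set (EuclideanSpace ℝ (Fin d))) (hD : MeasurableSet D)
    (c : Fin (n + 1) → EReal) (κ : Fin n → ℝ)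
    (u : EuclideanSpace ℝ (Fin d) → ℝ) (hu : Continuous u) :
    Measurable (levelSetMap D c κ u) := by
  unfold levelSetMap
  apply Finset.measurable_sum
  intro i _
  apply measurable_const.mul
  apply Measurable.indicator measurable_const
  have hm : Measurable (fun y => (u y : EReal)) := measurable_coe_real_ereal.comp hu.measurable
  have : {y ∈ D | c i.castSucc ≤ (u y : EReal) ∧ (u y : EReal) < c i.succ}
      = D ∩ ({y | c i.castSucc ≤ (u y : EReal)} ∩ {y | (u y : EReal) < c i.succ}) := by
    ext y; simp only [Set.mem_setOf_eq, Set.mem_inter_iff, and_assoc]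
  rw [this]
  exact hD.inter ((measurableSet_le measurable_const hm).inter
    (measurableSet_lt hm measurable_const))

lemma aux_thresh {m : ℕ} (c : Fin m → EReal) (r : ℝ) (h : ∀ j, (r : EReal) ≠ c j) :
    ∃ δ > 0, ∀ w : ℝ, |w - r| < δ → ∀ j, ((c j ≤ (w : EReal)) ↔ (c j ≤ (r : EReal))) := by
  have key1 : ∀ e : EReal, (r : EReal) ≠ e →
      ∃ δ > 0, ∀ w : ℝ, |w - r| < δ → ((e ≤ (w : EReal)) ↔ (e ≤ (r : EReal))) := by
    intro e
    induction e using EReal.rec with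
    | bot => exact fun _ => ⟨1, one_pos, fun w _ => by simp⟩
    | top => exact fun _ => ⟨1, one_pos, fun w _ => by simp⟩
    | coe t =>
      intro hne
      have ht : r ≠ t := fun he => hne (by rw [he])
      refine ⟨|r - t|, abs_pos.mpr (sub_ne_zero.mpr ht), fun w hw => ?_⟩
      rw [EReal.coe_le_coe_iff, EReal.coe_le_coe_iff]
      rcases lt_or_gt_of_ne ht with hlt | hgt
      · have he : |r - t| = t - r := by rw [abs_of_neg (by linarith : r - t < 0)]; ring
        rw [he, abs_lt] at hw
        constructor <;> intro <;> linarith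
      · have he : |r - t| = r - t := abs_of_pos (by linarith)
        rw [he, abs_lt] at hw
        constructor <;> intro <;> linarith
  have key : ∀ j, ∃ δ > 0, ∀ w : ℝ, |w - r| < δ → ((c j ≤ (w : EReal)) ↔ (c j ≤ (r : EReal))) :=
    fun j => key1 (c j) (h j)
  choose δ hδpos hδ using key
  rcases Nat.eq_zero_or_pos m with hm | hm
  · subst hm; exact ⟨1, one_pos, fun w _ j => j.elim0⟩
  · haveI : Nonempty (Fin m) := ⟨⟨0, hm⟩⟩
    refine ⟨Finset.univ.inf' Finset.univ_nonempty δ, ?_, fun w hw j => ?_⟩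
    · rw [gt_iff_lt, Finset.lt_inf'_iff]; exact fun j _ => hδpos j
    · exact hδ j w (lt_of_lt_of_le hw (Finset.inf'_le _ (Finset.mem_univ j)))

/-- If `u` is continuous on the bounded domain `D`, its level sets at the interior
threshold values are Lebesgue-null, and `u_ε` are continuous with `‖u_ε − u‖_∞ < ε`
on `D`, then `‖F(u_ε) − F(u)‖_{L^p(D)} → 0` as `ε → 0`, for every `1 ≤ p < ∞`. -/
theorem stmt_17 {d n : ℕ} (D : Set (EuclideanSpace ℝ (Fin d)))
    (hDmeas : MeasurableSet D) (hDbdd : Bornology.IsBounded D)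
    (c : Fin (n + 1) → EReal) (hmono : StrictMono c)
    (hbot : c 0 = ⊥) (htop : c (Fin.last n) = ⊤) (κ : Fin n → ℝ)
    (u : EuclideanSpace ℝ (Fin d) → ℝ) (hu : Continuous u)
    (hnull : ∀ i : Fin (n + 1), i ≠ 0 → i ≠ Fin.last n →
      volume {x ∈ D | (u x : EReal) = c i} = 0)
    (p : ℝ) (hp : 1 ≤ p)
    (v : ℝ → EuclideanSpace ℝ (Fin d) → ℝ)
    (hvcont : ∀ ε : ℝ, 0 < ε → Continuous (v ε))
    (hvclose : ∀ ε : ℝ, 0 < ε → ∀ x ∈ D, |v ε x - u x| < ε) :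
    Tendsto (fun ε : ℝ =>
        ∫ x in D, |levelSetMap D c κ (v ε) x - levelSetMap D c κ u x| ^ p)
      (nhdsWithin 0 (Set.Ioi 0)) (nhds 0) := by
  classical
  have hppos : (0:ℝ) < p := lt_of_lt_of_le one_pos hp
  -- uniform bound on levelSetMap
  have hB : ∀ (w : EuclideanSpace ℝ (Fin d) → ℝ) x,
      |levelSetMap D c κ w x| ≤ ∑ i : Fin n, |κ i| := by
    intro w x
    refine (Finset.abs_sum_le_sum_abs _ _).trans (Finset.sum_le_sum fun i _ => ?_)
    rw [abs_mul]
    have h1 : |Set.indicator {y ∈ D | c i.castSucc ≤ (w y : EReal) ∧ (w y : EReal) < c i.succ}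
        (fun _ => (1:ℝ)) x| ≤ 1 := by
      rw [Set.indicator_apply]; split <;> simp
    calc |κ i| * _ ≤ |κ i| * 1 := mul_le_mul_of_nonneg_left h1 (abs_nonneg _)
      _ = |κ i| := mul_one _
  set S : ℝ := ∑ i : Fin n, |κ i| with hSdef
  have hSnonneg : 0 ≤ S := Finset.sum_nonneg fun i _ => abs_nonneg _
  -- a.e. pointwise convergence set
  have hbad : ∀ᵐ x ∂(volume.restrict D), x ∈ D ∧ ∀ j, (u x : EReal) ≠ c j := by
    have h1 : ∀ᵐ x ∂(volume.restrict D), x ∈ D := ae_restrict_mem hDmeas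
    have h2 : ∀ᵐ x ∂(volume.restrict D),
        ∀ j : Fin (n+1), j ≠ 0 → j ≠ Fin.last n → (u x : EReal) ≠ c j := by
      rw [MeasureTheory.ae_all_iff]
      intro j
      by_cases hj0 : j = 0
      · filter_upwards with x hx; exact absurd hx (by simp [hj0])
      by_cases hjl : j = Fin.last n
      · filter_upwards with x _ hx; exact absurd hx (by simp [hjl])
      have hz : volume.restrict D {x | ¬ (j ≠ 0 → j ≠ Fin.last n → (u x : EReal) ≠ c j)} = 0 := by
        rw [Measure.restrict_apply' hDmeas]
        refine measure_mono_null ?_ (hnull j hj0 hjl)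
        intro x hx
        simp only [Set.mem_inter_iff, Set.mem_setOf_eq] at hx ⊢
        refine ⟨hx.2, ?_⟩
        by_contra hne
        exact hx.1 fun _ _ => hne
      exact (MeasureTheory.ae_iff).2 hz
    filter_upwards [h1, h2] with x hx1 hx2
    refine ⟨hx1, fun j => ?_⟩
    by_cases hj0 : j = 0
    · rw [hj0, hbot]; exact EReal.coe_ne_bot _
    by_cases hjl : j = Fin.last n
    · rw [hjl, htop]; exact EReal.coe_ne_top _
    exact hx2 j hj0 hjl
  have key := MeasureTheory.tendsto_integral_filter_of_dominated_convergence
    (μ := volume.restrict D) (l := nhdsWithin (0:ℝ) (Set.Ioi 0))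
    (F := fun ε x => |levelSetMap D c κ (v ε) x - levelSetMap D c κ u x| ^ p)
    (f := fun _ => (0:ℝ)) (bound := fun _ => (2 * S) ^ p)
    (by
      filter_upwards [self_mem_nhdsWithin] with ε hε
      exact (((lvl_meas D hDmeas c κ (v ε) (hvcont ε hε)).sub
        (lvl_meas D hDmeas c κ u hu)).abs.pow_const p).aestronglyMeasurable)
    (by
      filter_upwards [self_mem_nhdsWithin] with ε hε
      filter_upwards with x
      have h1 : |levelSetMap D c κ (v ε) x - levelSetMap D c κ u x| ≤ 2 * S := by
        have := hB (v ε) x; have := hB u x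
        have := abs_sub (levelSetMap D c κ (v ε) x) (levelSetMap D c κ u x)
        calc |levelSetMap D c κ (v ε) x - levelSetMap D c κ u x|
            ≤ |levelSetMap D c κ (v ε) x| + |levelSetMap D c κ u x| := abs_sub _ _
          _ ≤ S + S := by have := hB (v ε) x; have := hB u x; linarith [hB (v ε) x, hB u x]
          _ = 2 * S := by ring
      have h2 : (0:ℝ) ≤ |levelSetMap D c κ (v ε) x - levelSetMap D c κ u x| ^ p :=
        Real.rpow_nonneg (abs_nonneg _) p
      rw [Real.norm_eq_abs, abs_of_nonneg h2]
      exact Real.rpow_le_rpow (abs_nonneg _) h1 hppos.le)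
    (integrableOn_const hDbdd.measure_lt_top.ne)
    (by
      filter_upwards [hbad] with x hx
      obtain ⟨hxD, hxne⟩ := hx
      obtain ⟨δ, hδpos, hδ⟩ := aux_thresh c (u x) hxne
      have hev : ∀ᶠ ε in nhdsWithin (0:ℝ) (Set.Ioi 0),
          |levelSetMap D c κ (v ε) x - levelSetMap D c κ u x| ^ p = 0 := by
        filter_upwards [Ioo_mem_nhdsGT_of_mem
          (Set.mem_Ico.2 ⟨le_refl (0:ℝ), hδpos⟩)] with ε hε
        have hεpos : 0 < ε := hε.1
        have hclose : |v ε x - u x| < δ := lt_trans (hvclose ε hεpos x hxD) hε.2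
        have heq : levelSetMap D c κ (v ε) x = levelSetMap D c κ u x := by
          unfold levelSetMap
          refine Finset.sum_congr rfl fun i _ => ?_
          congr 1
          have hiff : (x ∈ {y ∈ D | c i.castSucc ≤ ((v ε) y : EReal) ∧ ((v ε) y : EReal) < c i.succ})
              ↔ (x ∈ {y ∈ D | c i.castSucc ≤ (u y : EReal) ∧ (u y : EReal) < c i.succ}) := by
            simp only [Set.mem_setOf_eq]
            have hc1 := hδ (v ε x) hclose i.castSucc
            have hc2 := hδ (v ε x) hclose i.succ
            constructor
            · rintro ⟨hD', hle, hlt⟩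
              exact ⟨hD', hc1.1 hle, not_le.1 fun hge => (not_le.2 hlt) (hc2.2 hge)⟩
            · rintro ⟨hD', hle, hlt⟩
              exact ⟨hD', hc1.2 hle, not_le.1 fun hge => (not_le.2 hlt) (hc2.1 hge)⟩
          rw [Set.indicator_apply, Set.indicator_apply, if_congr hiff rfl rfl]
        rw [heq, sub_self, abs_zero, Real.zero_rpow (ne_of_gt hppos)]
      exact Tendsto.congr' (hev.mono fun ε h => h.symm) tendsto_const_nhds)
  simpa using key
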